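/- The down-up Markov chain on 𝒯_n satisfies K_n = (1/C(n,2)) · A G P A^{-1}, where A is the diagonal operator on ℂ𝒯_n sending t to m(t)·t; equivalently, for all t, t' ∈ 𝒯_n, K(t,t') = (m(t') / (C(n,2) m(t))) · Σ_{s: s ↗ t and s ↗ t'} m(s,t) n(s,t'). -/

import Mathlib

/-!
Common definitions: rooted unlabeled trees on `n` vertices, the growth/pruning
coefficients `n(t,t')` and `m(t,t')`, the measure `π_n`, the up/down transition
probabilities, the down-up and up-down Markov chains, and separation distance.

A rooted tree is represented as `PreTree.node cs` where `cs` is the list of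
subtrees of the root's children.  An *unlabeled* rooted tree is represented by
its canonical representative (children recursively sorted by an injective
encoding into `ℕ`), and `trees n` is the finite set of canonical rooted trees
on `n` vertices.
-/

namespace RootedTreeChain

inductive PreTree : Type where
  | node : List PreTree → PreTree

namespace PreTree

/- Number of vertices. -/
mutual
  def size : PreTree → ℕ
    | .node cs => 1 + sizeList cs
  def sizeList : List PreTree → ℕ
    | [] => 0
    | t :: ts => size t + sizeList ts
end

mutual
def deq : (a b : PreTree) → Decidable (a = b)
  | .node cs, .node ds =>
    match deqList cs ds with
    | isTrue h => isTrue (by rw [h])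
    | isFalse h => isFalse (by intro hh; cases hh; exact h rfl)
def deqList : (as bs : List PreTree) → Decidable (as = bs)
  | [], [] => isTrue rfl
  | [], _ :: _ => isFalse (by simp)
  | _ :: _, [] => isFalse (by simp)
  | a :: as, b :: bs =>
    match deq a b, deqList as bs with
    | isTrue h1, isTrue h2 => isTrue (by rw [h1, h2])
    | isFalse h1, _ => isFalse (by intro hh; injection hh; contradiction)
    | _, isFalse h2 => isFalse (by intro hh; injection hh; contradiction)
end

instance : DecidableEq PreTree := deq

/- An injective encoding of trees into `ℕ`, used only to sort children
so that each unlabeled rooted tree has a unique canonical representative. -/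
mutual
  def enc : PreTree → ℕ
    | .node cs => encList cs
  def encList : List PreTree → ℕ
    | [] => 0
    | t :: ts => Nat.pair (enc t) (encList ts) + 1
end

/- Canonical representative of the isomorphism class of a rooted tree:
recursively sort the children by their encoding. -/
mutual
  def canon : PreTree → PreTree
    | .node cs => .node ((canonList cs).mergeSort (fun a b => enc a ≤ enc b))
  def canonList : List PreTree → List PreTree
    | [] => []
    | t :: ts => canon t :: canonList ts
end

/-- The one-vertex rooted tree `•`. -/
def leaf : PreTree := .node []

/- The addresses (paths of child indices from the root) of all vertices. -/
mutual
  def positions : PreTree → List (List ℕ)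
    | .node cs => [] :: positionsList 0 cs
  def positionsList : ℕ → List PreTree → List (List ℕ)
    | _, [] => []
    | i, t :: ts => (positions t).map (fun p => i :: p) ++ positionsList (i + 1) ts
end

/- The addresses of all terminal vertices (vertices with no outgoing edge). -/
mutual
  def termPositions : PreTree → List (List ℕ)
    | .node [] => [[]]
    | .node (c :: cs) => termPositionsList 0 (c :: cs)
  def termPositionsList : ℕ → List PreTree → List (List ℕ)
    | _, [] => []
    | i, t :: ts => (termPositions t).map (fun p => i :: p) ++ termPositionsList (i + 1) ts
end

/- Attach a new terminal vertex by an edge to the vertex at address `p`. -/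
mutual
  def addLeafAt : PreTree → List ℕ → PreTree
    | .node cs, [] => .node (cs ++ [leaf])
    | .node cs, i :: p => .node (addLeafAtList cs i p)
  def addLeafAtList : List PreTree → ℕ → List ℕ → List PreTree
    | [], _, _ => []
    | t :: ts, 0, p => addLeafAt t p :: ts
    | t :: ts, i + 1, p => t :: addLeafAtList ts i p
end

/- Remove the (terminal) vertex at address `p` together with the edge into it. -/
mutual
  def removeAt : PreTree → List ℕ → PreTree
    | .node cs, [] => .node cs
    | .node cs, [i] => .node (cs.eraseIdx i)
    | .node cs, i :: p => .node (removeAtList cs i p)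
  def removeAtList : List PreTree → ℕ → List ℕ → List PreTree
    | [], _, _ => []
    | t :: ts, 0, p => removeAt t p :: ts
    | t :: ts, i + 1, p => t :: removeAtList ts i p
end

/-- For `s ↗ t` (and more generally any `s, t` with `size t = size s + 1`),
`ncoef s t` is `n(s,t)`: the number of vertices of `s` to which a new edge can
be added to obtain `t`. -/
def ncoef (s t : PreTree) : ℕ :=
  ((positions s).filter (fun p => canon (addLeafAt s p) = t)).length

/-- For `s ↗ t`, `mcoef s t` is `m(s,t)`: the number of edges of `t` (into a
terminal vertex) which when removed give `s`. -/
def mcoef (s t : PreTree) : ℕ :=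
  ((termPositions t).filter (fun p => canon (removeAt t p) = s)).length

/-- The list of all (canonical representatives of) rooted unlabeled trees on
`n` vertices: every tree on `n+1 ≥ 2` vertices is obtained by attaching a new
terminal vertex to a tree on `n` vertices. -/
def treeList : ℕ → List PreTree
  | 0 => []
  | 1 => [leaf]
  | n + 2 =>
      ((treeList (n + 1)).flatMap
        (fun t => (positions t).map (fun p => canon (addLeafAt t p)))).dedup

/-- The set `𝒯_n` of rooted unlabeled trees on `n` vertices. -/
def trees (n : ℕ) : Finset PreTree := (treeList n).toFinset

/-- `T_n = |𝒯_n|`, the number of rooted unlabeled trees on `n` vertices. -/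
def T (n : ℕ) : ℕ := (trees n).card

/-- Generalized growth coefficients: `nGen k t t'` is the coefficient `n(t,t')`
of `t'` in `G^k(t)` (for `size t' = size t + k`). -/
def nGen : ℕ → PreTree → PreTree → ℕ
  | 0, t, t' => if t = t' then 1 else 0
  | k + 1, t, t' => ((treeList (t.size + k)).map (fun s => nGen k t s * ncoef s t')).sum

/-- Generalized pruning coefficients: `mGen k t t'` is the coefficient `m(t,t')`
of `t` in `P^k(t')` (for `size t' = size t + k`). -/
def mGen : ℕ → PreTree → PreTree → ℕ
  | 0, t, t' => if t = t' then 1 else 0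
  | k + 1, t, t' => ((treeList (t'.size - 1)).map (fun s => mcoef s t' * mGen k t s)).sum

/-- `m(t) = m(•,t)`, the number of ways to take `t` apart by sequentially
removing terminal edges. -/
def mWt (t : PreTree) : ℕ := mGen (t.size - 1) leaf t

/-- `n(t) = n(•,t)`, the number of ways to build `t` up from `•`. -/
def nWt (t : PreTree) : ℕ := nGen (t.size - 1) leaf t

/-- The measure `π_n(t) = m(t) n(t) / ∏_{i=2}^n C(i,2)` on `𝒯_n`. -/
def piM (n : ℕ) (t : PreTree) : ℚ :=
  (mWt t * nWt t : ℚ) / ∏ i ∈ Finset.Icc 2 n, (Nat.choose i 2 : ℚ)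

/-- Upward transition probability `P_u(s,t) = m(s,t) n(t) / (C(n,2) n(s))`
from `s ∈ 𝒯_{n-1}` to `t ∈ 𝒯_n`. -/
def Pu (n : ℕ) (s t : PreTree) : ℚ :=
  (mcoef s t : ℚ) * (nWt t : ℚ) / ((Nat.choose n 2 : ℚ) * (nWt s : ℚ))

/-- Downward transition probability `P_d(t,s) = m(s,t) m(s) / m(t)`
from `t ∈ 𝒯_n` to `s ∈ 𝒯_{n-1}`. -/
def Pd (t s : PreTree) : ℚ :=
  (mcoef s t : ℚ) * (mWt s : ℚ) / (mWt t : ℚ)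

/-- The down-up Markov chain on `𝒯_n`:
`K(t,t') = Σ_{s : s ↗ t, s ↗ t'} P_d(t,s) P_u(s,t')`.  (The sum may be taken
over all `s ∈ 𝒯_{n-1}` since the summand vanishes unless `s ↗ t` and `s ↗ t'`.) -/
def K (n : ℕ) (t t' : PreTree) : ℚ :=
  ∑ s ∈ trees (n - 1), Pd t s * Pu n s t'

/-- `r`-step transition probabilities `K^r(t,t')` of the down-up chain. -/
def Kpow (n : ℕ) : ℕ → PreTree → PreTree → ℚ
  | 0, t, t' => if t = t' then 1 else 0
  | r + 1, t, t' => ∑ s ∈ trees n, K n t s * Kpow n r s t'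

/-- The up-down Markov chain on `𝒯_n`:
`DU_n(t,t') = Σ_{s : s ⋗ t, s ⋗ t'} P_u(t,s) P_d(s,t')`. -/
def DU (n : ℕ) (t t' : PreTree) : ℚ :=
  ∑ s ∈ trees (n + 1), Pu (n + 1) t s * Pd s t'

/-- `r`-step transition probabilities of the up-down chain. -/
def DUpow (n : ℕ) : ℕ → PreTree → PreTree → ℚ
  | 0, t, t' => if t = t' then 1 else 0
  | r + 1, t, t' => ∑ s ∈ trees n, DU n t s * DUpow n r s t'

/-- Maximal separation distance `s^*(r) = max_{t,t' ∈ 𝒯_n} [1 - K^r(t,t')/π_n(t')]`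
of the down-up chain on `𝒯_n`. -/
noncomputable def sStar (n r : ℕ) : ℝ :=
  sSup {x : ℝ | ∃ t ∈ trees n, ∃ t' ∈ trees n,
    x = 1 - (Kpow n r t t' : ℝ) / (piM n t' : ℝ)}

/-- Maximal separation distance of the up-down chain on `𝒯_n`. -/
noncomputable def sStarDU (n r : ℕ) : ℝ :=
  sSup {x : ℝ | ∃ t ∈ trees n, ∃ t' ∈ trees n,
    x = 1 - (DUpow n r t t' : ℝ) / (piM n t' : ℝ)}

/-- The path on `n` vertices (rooted at an end): the unique rooted tree on
`n ≥ 2` vertices with exactly one terminal vertex. -/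
def pathTree : ℕ → PreTree
  | 0 => leaf
  | 1 => leaf
  | n + 2 => .node [pathTree (n + 1)]

/-- The star on `n` vertices (rooted at the center): the unique rooted tree on
`n` vertices with `n-1` terminal vertices. -/
def starTree (n : ℕ) : PreTree := .node (List.replicate (n - 1) leaf)


/- The order of the symmetry group `SG(t) = ∏_{v ∈ t} SG(t,v)`, where for a
vertex `v` with children `v_1, …, v_k`, `SG(t,v)` is generated by the
permutations exchanging isomorphic subtrees rooted at the `v_i`. -/
mutual
  def sgOrder : PreTree → ℕ
    | .node cs => sgOrderList cs *
        ((canonList cs).dedup.map (fun c => Nat.factorial ((canonList cs).count c))).prod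
  def sgOrderList : List PreTree → ℕ
    | [] => 1
    | t :: ts => sgOrder t * sgOrderList ts
end

/- `hProd t = ∏_{v ∈ t} h(v)`, the product over all vertices `v` of `t` of the
number `h(v)` of vertices of the subtree rooted at `v`. -/
mutual
  def hProd : PreTree → ℕ
    | .node cs => size (.node cs) * hProdList cs
  def hProdList : List PreTree → ℕ
    | [] => 1
    | t :: ts => hProd t * hProdList ts
end

/-- The matrix entry of `G P : ℂ𝒯_n → ℂ𝒯_n`: the coefficient of `t'` in `G(P(t))`. -/
def gpEntry (n : ℕ) (t t' : PreTree) : ℕ :=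
  ∑ s ∈ trees (n - 1), mcoef s t * ncoef s t'

/-- The matrix entry of `(G P)^l : ℂ𝒯_n → ℂ𝒯_n`: the coefficient of `t'` in `(GP)^l(t)`. -/
def gpPow (n : ℕ) : ℕ → PreTree → PreTree → ℕ
  | 0, t, t' => if t = t' then 1 else 0
  | l + 1, t, t' => ∑ u ∈ trees n, gpPow n l t u * gpEntry n u t'

end PreTree
namespace PreTree

/-! ### Basic list-form lemmas -/

theorem size_node (cs : List PreTree) : size (.node cs) = 1 + sizeList cs := by
  rw [size]

theorem sizeList_eq (l : List PreTree) : sizeList l = (l.map size).sum := by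
  induction l with
  | nil => rfl
  | cons t ts ih => rw [sizeList, ih, List.map_cons, List.sum_cons]

theorem one_le_size (t : PreTree) : 1 ≤ size t := by
  cases t with | node cs => rw [size_node]; omega

theorem size_lt_of_mem {c : PreTree} {cs : List PreTree} (h : c ∈ cs) :
    size c < size (.node cs) := by
  rw [size_node, sizeList_eq]
  have : size c ≤ (cs.map size).sum := List.single_le_sum (fun _ _ => Nat.zero_le _) _
    (List.mem_map_of_mem h)
  omega

/-- Strong induction principle for `PreTree`. -/
theorem ptInd {P : PreTree → Prop}
    (h : ∀ cs : List PreTree, (∀ c ∈ cs, P c) → P (.node cs)) : ∀ t, P t := by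
  have main : ∀ n : ℕ, ∀ t : PreTree, t.size = n → P t := by
    intro n
    induction n using Nat.strong_induction_on with
    | _ n IH =>
      intro t hn
      cases t with
      | node cs =>
        exact h cs fun c hc => IH (size c) (hn ▸ size_lt_of_mem hc) c rfl
  exact fun t => main t.size t rfl

theorem canonList_eq (l : List PreTree) : canonList l = l.map canon := by
  induction l with
  | nil => rfl
  | cons t ts ih => rw [canonList, ih, List.map_cons]

theorem canon_node (cs : List PreTree) :
    canon (.node cs) = .node ((cs.map canon).mergeSort (fun a b => enc a ≤ enc b)) := by
  rw [canon, canonList_eq]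

/-! ### `enc` is injective -/

theorem enc_injective : ∀ a b : PreTree, enc a = enc b → a = b := by
  have : ∀ a : PreTree, ∀ b, enc a = enc b → a = b := by
    refine ptInd (fun cs IH b h => ?_)
    cases b with
    | node ds =>
      rw [enc, enc] at h
      congr 1
      induction cs generalizing ds with
      | nil =>
        cases ds with
        | nil => rfl
        | cons d ds' => simp [encList] at h
      | cons c cs' ihc =>
        cases ds with
        | nil => simp [encList] at h
        | cons d ds' =>
          rw [encList, encList, Nat.add_left_inj] at h
          have h1 := Nat.pair_eq_pair.mp h
          have hc : c = d := IH c List.mem_cons_self d h1.1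
          have hcs : cs' = ds' := ihc (fun x hx => IH x (List.mem_cons_of_mem _ hx)) ds' h1.2
          rw [hc, hcs]
  exact this

/-! ### Sorting machinery -/

/-- The comparison used by `canon`. -/
def le (a b : PreTree) : Prop := enc a ≤ enc b

instance : IsTotal PreTree le := ⟨fun a b => Nat.le_total (enc a) (enc b)⟩
instance : IsTrans PreTree le := ⟨fun _ _ _ h1 h2 => Nat.le_trans h1 h2⟩
instance : IsAntisymm PreTree le :=
  ⟨fun a b h1 h2 => enc_injective a b (Nat.le_antisymm h1 h2)⟩

theorem sorted_mergeSort' (l : List PreTree) :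
    List.Pairwise le (l.mergeSort (fun a b => enc a ≤ enc b)) := by
  have := List.pairwise_mergeSort (le := fun a b : PreTree => decide (enc a ≤ enc b))
    (fun a b c h1 h2 => by simp_all; omega)
    (fun a b => by simp [Nat.le_total]) l
  exact List.Pairwise.imp (fun h => by simpa [le] using h) this

theorem mergeSort_eq_of_sorted {l : List PreTree} (h : List.Pairwise le l) :
    l.mergeSort (fun a b => enc a ≤ enc b) = l := by
  apply List.mergeSort_of_pairwise
  exact List.Pairwise.imp (fun h => by simpa [le] using h) h

theorem mergeSort_eq_iff {l l' : List PreTree} (h : List.Pairwise le l') :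
    l.mergeSort (fun a b => enc a ≤ enc b) = l' ↔ (l : Multiset PreTree) = (l' : Multiset PreTree) := by
  constructor
  · intro he
    rw [Multiset.coe_eq_coe, ← he]
    exact (List.mergeSort_perm l _).symm
  · intro hm
    rw [Multiset.coe_eq_coe] at hm
    exact List.Perm.eq_of_pairwise (fun a b _ _ h1 h2 => enc_injective a b (Nat.le_antisymm h1 h2))
      (sorted_mergeSort' l) h ((List.mergeSort_perm l _).trans hm)

end PreTree
namespace PreTree

/-! ### Canonical forms -/

theorem size_canon : ∀ t : PreTree, size (canon t) = size t := by
  refine ptInd (fun cs IH => ?_)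
  rw [canon_node, size_node, size_node, sizeList_eq, sizeList_eq]
  have hperm : ((cs.map canon).mergeSort (fun a b => enc a ≤ enc b)).Perm (cs.map canon) :=
    List.mergeSort_perm _ _
  rw [(hperm.map size).sum_eq, List.map_map]
  have hm : List.map (size ∘ canon) cs = List.map size cs :=
    List.map_congr_left (fun c hc => IH c hc)
  rw [hm]

theorem canon_canon : ∀ t : PreTree, canon (canon t) = canon t := by
  refine ptInd (fun cs IH => ?_)
  rw [canon_node, canon_node]
  congr 1
  have hmem : ∀ x ∈ (cs.map canon).mergeSort (fun a b => enc a ≤ enc b), canon x = x := by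
    intro x hx
    have := (List.mergeSort_perm (cs.map canon) _).mem_iff.mp hx
    obtain ⟨c, hc, rfl⟩ := List.mem_map.mp this
    exact IH c hc
  rw [List.map_congr_left hmem, List.map_id']
  exact mergeSort_eq_of_sorted (sorted_mergeSort' _)

/-- `t` is a canonical representative. -/
def IsCanon (t : PreTree) : Prop := canon t = t

theorem isCanon_canon (t : PreTree) : IsCanon (canon t) := canon_canon t

theorem isCanon_leaf : IsCanon leaf := by
  show canon leaf = leaf
  rw [leaf, canon_node]
  simp

/-- If `map f M = M` for an idempotent `f`, then `f` fixes every element of `M`. -/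
theorem multiset_map_fix {f : PreTree → PreTree} (hf : ∀ x, f (f x) = f x)
    {M : Multiset PreTree} (hM : Multiset.map f M = M) :
    ∀ x ∈ M, f x = x := by
  intro x hx
  by_contra hne
  have hxy : x ≠ f x := fun h => hne h.symm
  have hyM : f x ∈ M := by
    rw [← hM]; exact Multiset.mem_map_of_mem f hx
  have hcount : Multiset.count (f x) (Multiset.map f M) = Multiset.count (f x) M := by rw [hM]
  rw [Multiset.count_map] at hcount
  have hand : Multiset.filter (fun a => f x = a ∧ x = a) M = 0 :=
    Multiset.filter_eq_nil.mpr (by rintro a ha ⟨h1, h2⟩; exact hxy (h2.trans h1.symm))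
  have hsum := Multiset.filter_add_filter (fun a => f x = a) (fun a => x = a) M
  rw [hand, add_zero] at hsum
  have hor : Multiset.filter (fun a => f x = a ∨ x = a) M ≤
      Multiset.filter (fun a => f x = f a) M := by
    apply Multiset.monotone_filter_right
    intro a h
    rcases h with h | h
    · rw [← h]; exact (hf x).symm
    · rw [← h]
  have h1 : Multiset.filter (fun a => f x = a) M + Multiset.filter (fun a => x = a) M ≤
      Multiset.filter (fun a => f x = f a) M := hsum ▸ hor
  have hle := Multiset.card_le_card h1
  rw [Multiset.card_add, ← Multiset.count_eq_card_filter_eq, ← Multiset.count_eq_card_filter_eq]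
    at hle
  have hxpos : 0 < Multiset.count x M := Multiset.count_pos.mpr hx
  omega

end PreTree
namespace PreTree

theorem isCanon_node_elim {cs : List PreTree} (h : IsCanon (.node cs)) :
    (∀ c ∈ cs, IsCanon c) ∧ List.Pairwise le cs := by
  have h' : ((cs.map canon).mergeSort (fun a b => enc a ≤ enc b)) = cs := by
    have := h; rw [IsCanon, canon_node] at this; injection this
  constructor
  · intro c hc
    have hperm : ((cs.map canon).mergeSort (fun a b => enc a ≤ enc b)).Perm (cs.map canon) :=
      List.mergeSort_perm _ _
    have hperm2 := hperm
    rw [h'] at hperm2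
    have hmult : ((cs.map canon : List PreTree) : Multiset PreTree) = (cs : Multiset PreTree) :=
      Multiset.coe_eq_coe.mpr hperm2.symm
    have : Multiset.map canon (cs : Multiset PreTree) = (cs : Multiset PreTree) := by
      rw [← Multiset.map_coe] at hmult; exact hmult
    exact multiset_map_fix canon_canon this c (by exact_mod_cast hc)
  · rw [← h']; exact sorted_mergeSort' _

theorem map_canon_of_isCanon {cs : List PreTree} (h : ∀ c ∈ cs, IsCanon c) :
    cs.map canon = cs := by
  rw [List.map_congr_left h, List.map_id']

/-- Key characterization: `canon (node l) = node ds` for canonical `node ds`. -/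
theorem canon_node_eq_iff {l ds : List PreTree} (h : IsCanon (.node ds)) :
    canon (.node l) = .node ds ↔ ((l.map canon : List PreTree) : Multiset PreTree) = (ds : Multiset PreTree) := by
  rw [canon_node]
  constructor
  · intro he
    have hthis : (l.map canon).mergeSort (fun a b => enc a ≤ enc b) = ds := by injection he
    have hp : ((l.map canon).mergeSort (fun a b => enc a ≤ enc b)).Perm (l.map canon) :=
      List.mergeSort_perm _ _
    rw [hthis] at hp
    exact Multiset.coe_eq_coe.mpr hp.symm
  · intro hm
    have := (mergeSort_eq_iff (l := l.map canon) (isCanon_node_elim h).2).mpr hm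
    rw [this]

end PreTree
namespace PreTree

/-! ### positions / termPositions -/

theorem positions_node (cs : List PreTree) :
    positions (.node cs) = [] :: positionsList 0 cs := by rw [positions]

theorem positionsList_cons (i : ℕ) (t : PreTree) (ts : List PreTree) :
    positionsList i (t :: ts) = (positions t).map (i :: ·) ++ positionsList (i + 1) ts := by
  rw [positionsList]

theorem termPositionsList_cons (i : ℕ) (t : PreTree) (ts : List PreTree) :
    termPositionsList i (t :: ts) =
      (termPositions t).map (i :: ·) ++ termPositionsList (i + 1) ts := by
  rw [termPositionsList]

theorem termPositions_eq (cs : List PreTree) :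
    termPositions (.node cs) = if cs = [] then [[]] else termPositionsList 0 cs := by
  cases cs with
  | nil => rw [termPositions]; rfl
  | cons c cs' => rw [termPositions]; rfl

theorem mem_positionsList {q : List ℕ} : ∀ {l : List PreTree} {i : ℕ},
    q ∈ positionsList i l → ∃ j, ∃ hj : j < l.length, ∃ p,
      q = (i + j) :: p ∧ p ∈ positions l[j] := by
  intro l
  induction l with
  | nil => intro i h; rw [positionsList] at h; exact absurd h List.not_mem_nil
  | cons c cs ih =>
    intro i h
    rw [positionsList_cons, List.mem_append] at h
    rcases h with h | h
    · obtain ⟨p, hp, rfl⟩ := List.mem_map.mp h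
      exact ⟨0, Nat.succ_pos _, p, by simp, by simpa using hp⟩
    · obtain ⟨j, hj, p, rfl, hp⟩ := ih h
      exact ⟨j + 1, by simpa using Nat.succ_lt_succ hj, p, by rw [Nat.add_comm j 1, ← Nat.add_assoc], by simpa using hp⟩

theorem mem_termPositionsList {q : List ℕ} : ∀ {l : List PreTree} {i : ℕ},
    q ∈ termPositionsList i l → ∃ j, ∃ hj : j < l.length, ∃ p,
      q = (i + j) :: p ∧ p ∈ termPositions l[j] := by
  intro l
  induction l with
  | nil => intro i h; rw [termPositionsList] at h; exact absurd h List.not_mem_nil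
  | cons c cs ih =>
    intro i h
    rw [termPositionsList_cons, List.mem_append] at h
    rcases h with h | h
    · obtain ⟨p, hp, rfl⟩ := List.mem_map.mp h
      exact ⟨0, Nat.succ_pos _, p, by simp, by simpa using hp⟩
    · obtain ⟨j, hj, p, rfl, hp⟩ := ih h
      exact ⟨j + 1, by simpa using Nat.succ_lt_succ hj, p, by rw [Nat.add_comm j 1, ← Nat.add_assoc], by simpa using hp⟩

theorem termPositions_ne_nil : ∀ t : PreTree, termPositions t ≠ [] := by
  refine ptInd (fun cs IH => ?_)
  rw [termPositions_eq]
  cases cs with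
  | nil => simp
  | cons c cs' =>
    simp only [if_neg (List.cons_ne_nil c cs')]
    rw [termPositionsList_cons]
    intro h
    rcases List.append_eq_nil_iff.mp h with ⟨h1, _⟩
    exact IH c List.mem_cons_self (List.map_eq_nil_iff.mp h1)

theorem nil_mem_termPositions_iff {t : PreTree} : [] ∈ termPositions t ↔ t = leaf := by
  cases t with
  | node cs =>
    rw [termPositions_eq]
    cases cs with
    | nil => simp [leaf]
    | cons c cs' =>
      simp only [if_neg (List.cons_ne_nil c cs')]
      constructor
      · intro h
        obtain ⟨j, hj, p, hq, _⟩ := mem_termPositionsList h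
        exact absurd hq.symm (List.cons_ne_nil _ _)
      · intro h; exact absurd h (by simp [leaf])

/-! ### addLeafAtList / removeAtList -/

theorem addLeafAtList_eq : ∀ (l : List PreTree) (j : ℕ) (p : List ℕ) (hj : j < l.length),
    addLeafAtList l j p = l.set j (addLeafAt (l[j]'hj) p) := by
  intro l
  induction l with
  | nil => intro j p h; exact absurd h (by simp)
  | cons c cs ih =>
    intro j p h
    cases j with
    | zero => rw [addLeafAtList]; rfl
    | succ j' =>
      rw [addLeafAtList, ih j' p (by simpa using h)]
      rfl

theorem removeAtList_eq : ∀ (l : List PreTree) (j : ℕ) (p : List ℕ) (hj : j < l.length),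
    removeAtList l j p = l.set j (removeAt (l[j]'hj) p) := by
  intro l
  induction l with
  | nil => intro j p h; exact absurd h (by simp)
  | cons c cs ih =>
    intro j p h
    cases j with
    | zero => rw [removeAtList]; rfl
    | succ j' =>
      rw [removeAtList, ih j' p (by simpa using h)]
      rfl

theorem addLeafAt_nil (cs : List PreTree) :
    addLeafAt (.node cs) [] = .node (cs ++ [leaf]) := by rw [addLeafAt]

theorem addLeafAt_cons (cs : List PreTree) (i : ℕ) (p : List ℕ) :
    addLeafAt (.node cs) (i :: p) = .node (addLeafAtList cs i p) := by rw [addLeafAt]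

theorem removeAt_single (cs : List PreTree) (i : ℕ) :
    removeAt (.node cs) [i] = .node (cs.eraseIdx i) := by rw [removeAt]

theorem removeAt_cons_cons (cs : List PreTree) (i a : ℕ) (p : List ℕ) :
    removeAt (.node cs) (i :: a :: p) = .node (removeAtList cs i (a :: p)) := by
  rw [removeAt]
  exact fun h => absurd h (List.cons_ne_nil a p)

/-! ### multiset lemmas for set / eraseIdx -/

theorem coe_set_add {α : Type*} : ∀ (l : List α) (j : ℕ) (x : α), ∀ _ : j < l.length,
    ((l.set j x : List α) : Multiset α) + {l[j]} = (l : Multiset α) + {x} := by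
  intro l
  induction l with
  | nil => intro j x h; exact absurd h (by simp)
  | cons c cs ih =>
    intro j x h
    cases j with
    | zero =>
      simp only [List.set_cons_zero, List.getElem_cons_zero, ← Multiset.cons_coe,
        ← Multiset.singleton_add]
      abel
    | succ j' =>
      have hih := ih j' x (by simpa using h)
      simp only [List.set_cons_succ, List.getElem_cons_succ, ← Multiset.cons_coe,
        ← Multiset.singleton_add]
      rw [add_assoc, hih, ← add_assoc]

theorem coe_eraseIdx_add {α : Type*} : ∀ (l : List α) (j : ℕ), ∀ _ : j < l.length,
    ((l.eraseIdx j : List α) : Multiset α) + {l[j]} = (l : Multiset α) := by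
  intro l
  induction l with
  | nil => intro j h; exact absurd h (by simp)
  | cons c cs ih =>
    intro j h
    cases j with
    | zero =>
      simp only [List.eraseIdx_cons_zero, List.getElem_cons_zero, ← Multiset.cons_coe,
        ← Multiset.singleton_add]
      abel
    | succ j' =>
      have hih := ih j' (by simpa using h)
      simp only [List.eraseIdx_cons_succ, List.getElem_cons_succ, ← Multiset.cons_coe,
        ← Multiset.singleton_add]
      rw [add_assoc, hih]

end PreTree
namespace PreTree

/-! ### size lemmas -/

theorem sizeList_coe (l : List PreTree) :
    sizeList l = (Multiset.map size (l : Multiset PreTree)).sum := by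
  rw [sizeList_eq, Multiset.map_coe, Multiset.sum_coe]

theorem sizeList_set {l : List PreTree} {j : ℕ} (hj : j < l.length) (x : PreTree) :
    sizeList (l.set j x) + size (l[j]'hj) = sizeList l + size x := by
  have h := coe_set_add l j x hj
  have := congrArg (fun M => (Multiset.map size M).sum) h
  simpa [sizeList_coe] using this

theorem sizeList_eraseIdx {l : List PreTree} {j : ℕ} (hj : j < l.length) :
    sizeList (l.eraseIdx j) + size (l[j]'hj) = sizeList l := by
  have h := coe_eraseIdx_add l j hj
  have := congrArg (fun M => (Multiset.map size M).sum) h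
  simpa [sizeList_coe] using this

theorem sizeList_append (l1 l2 : List PreTree) :
    sizeList (l1 ++ l2) = sizeList l1 + sizeList l2 := by
  rw [sizeList_eq, sizeList_eq, sizeList_eq, List.map_append, List.sum_append]

theorem size_addLeafAt : ∀ t : PreTree, ∀ p ∈ positions t,
    size (addLeafAt t p) = size t + 1 := by
  refine ptInd (fun cs IH => ?_)
  intro p hp
  rw [positions_node] at hp
  rcases List.mem_cons.mp hp with rfl | hp
  · rw [addLeafAt_nil, size_node, size_node, sizeList_append]
    have : sizeList [leaf] = 1 := rfl
    omega
  · obtain ⟨j, hj, p', rfl, hp'⟩ := mem_positionsList hp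
    rw [Nat.zero_add, addLeafAt_cons, addLeafAtList_eq cs j p' hj]
    have hmem : cs[j] ∈ cs := List.getElem_mem hj
    have hIH := IH _ hmem p' hp'
    have hset := sizeList_set hj (addLeafAt (cs[j]'hj) p')
    rw [size_node, size_node]
    omega

theorem size_removeAt : ∀ t : PreTree, ∀ q ∈ termPositions t, q ≠ [] →
    size (removeAt t q) + 1 = size t := by
  refine ptInd (fun cs IH => ?_)
  intro q hq hne
  rw [termPositions_eq] at hq
  by_cases hcs : cs = []
  · rw [if_pos hcs] at hq
    exact absurd (List.mem_singleton.mp hq) hne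
  · rw [if_neg hcs] at hq
    obtain ⟨j, hj, q', rfl, hq'⟩ := mem_termPositionsList hq
    rw [Nat.zero_add]
    have hmem : cs[j] ∈ cs := List.getElem_mem hj
    cases q' with
    | nil =>
      have hleaf : cs[j] = leaf := nil_mem_termPositions_iff.mp hq'
      rw [removeAt_single, size_node, size_node]
      have := sizeList_eraseIdx hj
      rw [hleaf] at this
      have : sizeList (cs.eraseIdx j) + 1 = sizeList cs := by
        have hszleaf : size leaf = 1 := rfl
        omega
      omega
    | cons a p =>
      rw [removeAt_cons_cons, removeAtList_eq cs j _ hj, size_node, size_node]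
      have hIH := IH _ hmem (a :: p) hq' (List.cons_ne_nil a p)
      have hset := sizeList_set hj (removeAt (cs[j]'hj) (a :: p))
      omega

theorem size_eq_one_iff {t : PreTree} : size t = 1 ↔ t = leaf := by
  cases t with
  | node cs =>
    constructor
    · intro h
      rw [size_node] at h
      have h0 : sizeList cs = 0 := by omega
      cases cs with
      | nil => rfl
      | cons c cs' =>
        rw [sizeList] at h0
        have := one_le_size c
        omega
    · intro h; rw [h]; rfl

/-- `ncoef s t = 0` unless `size t = size s + 1`. -/
theorem ncoef_eq_zero_of_size {s t : PreTree} (h : size t ≠ size s + 1) :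
    ncoef s t = 0 := by
  rw [ncoef, List.length_eq_zero_iff]
  rw [List.filter_eq_nil_iff]
  intro p hp
  simp only [decide_eq_true_eq]
  intro hc
  apply h
  rw [← hc, size_canon, size_addLeafAt s p hp]

/-- `mcoef s t = 0` unless `size t = size s + 1`, provided `t ≠ leaf`. -/
theorem mcoef_eq_zero_of_size {s t : PreTree} (ht : t ≠ leaf) (h : size t ≠ size s + 1) :
    mcoef s t = 0 := by
  rw [mcoef, List.length_eq_zero_iff]
  rw [List.filter_eq_nil_iff]
  intro q hq
  simp only [decide_eq_true_eq]
  intro hc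
  apply h
  have hqne : q ≠ [] := by
    intro hq0
    exact ht (nil_mem_termPositions_iff.mp (hq0 ▸ hq))
  have := size_removeAt t q hq hqne
  rw [← hc, size_canon]
  omega

theorem ncoef_to_leaf (s : PreTree) : ncoef s leaf = 0 := by
  apply ncoef_eq_zero_of_size
  have := one_le_size s
  have : size leaf = 1 := rfl
  omega

end PreTree

def _root_.List.enumFrom {α : Type*} : ℕ → List α → List (ℕ × α)
  | _, [] => []
  | n, x :: xs => (n, x) :: List.enumFrom (n + 1) xs

@[simp] theorem _root_.List.enumFrom_nil {α : Type*} (n : ℕ) : ([] : List α).enumFrom n = [] := rfl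

theorem _root_.List.enumFrom_cons {α : Type*} (n : ℕ) (x : α) (xs : List α) :
    (x :: xs).enumFrom n = (n, x) :: xs.enumFrom (n + 1) := rfl

theorem _root_.List.enumFrom_map_snd {α : Type*} : ∀ (n : ℕ) (l : List α), (l.enumFrom n).map Prod.snd = l
  | _, [] => rfl
  | n, x :: xs => by rw [List.enumFrom_cons, List.map_cons, List.enumFrom_map_snd (n + 1) xs]

namespace PreTree

/-! ### countP decompositions -/

theorem countP_positionsList (P : List ℕ → Bool) :
    ∀ (l : List PreTree) (i : ℕ),
    (positionsList i l).countP P =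
      ((l.enumFrom i).map (fun jd => (positions jd.2).countP (fun p => P (jd.1 :: p)))).sum := by
  intro l
  induction l with
  | nil => intro i; rw [positionsList]; simp
  | cons c cs ih =>
    intro i
    rw [positionsList_cons, List.countP_append, List.countP_map, ih (i + 1)]
    rw [List.enumFrom_cons, List.map_cons, List.sum_cons]
    rfl

theorem countP_termPositionsList (P : List ℕ → Bool) :
    ∀ (l : List PreTree) (i : ℕ),
    (termPositionsList i l).countP P =
      ((l.enumFrom i).map (fun jd => (termPositions jd.2).countP (fun p => P (jd.1 :: p)))).sum := by
  intro l
  induction l with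
  | nil => intro i; rw [termPositionsList]; simp
  | cons c cs ih =>
    intro i
    rw [termPositionsList_cons, List.countP_append, List.countP_map, ih (i + 1)]
    rw [List.enumFrom_cons, List.map_cons, List.sum_cons]
    rfl

/-- Partition a `countP` of a predicate factoring through `g` by the value of `g`. -/
theorem countP_partition {α β : Type*} [DecidableEq β] (g : α → β) (Q : β → Prop)
    [DecidablePred Q] (l : List α) (S : Finset β) (hS : ∀ a ∈ l, Q (g a) → g a ∈ S) :
    l.countP (fun a => decide (Q (g a))) =
      ∑ d ∈ S, if Q d then l.countP (fun a => decide (g a = d)) else 0 := by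
  induction l with
  | nil => simp
  | cons a l ih =>
    have hS' : ∀ x ∈ l, Q (g x) → g x ∈ S := fun x hx => hS x (List.mem_cons_of_mem a hx)
    rw [List.countP_cons, ih hS']
    have hsplit : ∀ d ∈ S, (if Q d then l.countP (fun x => decide (g x = d)) + (if g a = d then 1 else 0) else 0)
        = (if Q d then l.countP (fun x => decide (g x = d)) else 0)
          + (if Q d then (if g a = d then 1 else 0) else 0) := by
      intro d _
      split_ifs <;> simp
    have hrw : ∑ d ∈ S, (if Q d then (a :: l).countP (fun x => decide (g x = d)) else 0)
        = ∑ d ∈ S, ((if Q d then l.countP (fun x => decide (g x = d)) else 0)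
          + (if Q d then (if g a = d then 1 else 0) else 0)) := by
      refine Finset.sum_congr rfl (fun d hd => ?_)
      rw [List.countP_cons]
      simp only [decide_eq_true_eq]
      exact hsplit d hd
    rw [hrw, Finset.sum_add_distrib]
    congr 1
    simp only [decide_eq_true_eq]
    by_cases hQ : Q (g a)
    · have hmem : g a ∈ S := hS a (List.mem_cons_self) hQ
      rw [if_pos hQ]
      rw [Finset.sum_eq_single (g a)]
      · simp [hQ]
      · intro d _ hne
        split_ifs with h1 h2
        · exact absurd h2.symm hne
        · rfl
        · rfl
      · intro habs; exact absurd hmem habs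
    · rw [if_neg hQ]
      refine (Finset.sum_eq_zero (fun d hd => ?_)).symm
      split_ifs with h1 h2
      · exact absurd (h2 ▸ h1) hQ
      · rfl
      · rfl

end PreTree
namespace PreTree

theorem mem_enumFrom' {α : Type*} {jd : ℕ × α} : ∀ {l : List α} {i : ℕ},
    jd ∈ l.enumFrom i → ∃ j, ∃ hj : j < l.length, jd = (i + j, l[j]'hj) := by
  intro l
  induction l with
  | nil => intro i h; exact absurd h List.not_mem_nil
  | cons c cs ih =>
    intro i h
    rw [List.enumFrom_cons, List.mem_cons] at h
    rcases h with rfl | h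
    · exact ⟨0, Nat.succ_pos _, by simp⟩
    · obtain ⟨j, hj, rfl⟩ := ih h
      refine ⟨j + 1, by simpa using Nat.succ_lt_succ hj, ?_⟩
      simp only [List.getElem_cons_succ, Prod.mk.injEq]
      exact ⟨by omega, trivial⟩

theorem cond_set_iff {cs ds : List PreTree} (hcs : ∀ c ∈ cs, IsCanon c)
    (ht : IsCanon (.node ds)) {j : ℕ} (hj : j < cs.length) (x : PreTree) :
    canon (.node (cs.set j x)) = .node ds ↔
      ((cs : Multiset PreTree) + {canon x} = (ds : Multiset PreTree) + {cs[j]'hj}) := by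
  rw [canon_node_eq_iff ht, List.map_set, map_canon_of_isCanon hcs]
  have key := coe_set_add cs j (canon x) hj
  constructor
  · intro h
    rw [← key, h, add_comm]
  · intro h
    have : ((cs.set j (canon x) : List PreTree) : Multiset PreTree) + {cs[j]'hj}
        = (ds : Multiset PreTree) + {cs[j]'hj} := by
      rw [key, h, add_comm]
    exact add_right_cancel this

/-- The universe of candidate children. -/
def childU (cs ds : List PreTree) : Finset PreTree :=
  (cs : Multiset PreTree).toFinset ∪ (ds : Multiset PreTree).toFinset

theorem mcoef_node_eq {cs ds : List PreTree} (hs : IsCanon (.node cs))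
    (ht : IsCanon (.node ds)) (hne : ds ≠ []) :
    mcoef (.node cs) (.node ds)
      = Multiset.count leaf (ds : Multiset PreTree) *
          (if (cs : Multiset PreTree) + {leaf} = (ds : Multiset PreTree) then 1 else 0)
        + ∑ d ∈ (childU cs ds).erase leaf, Multiset.count d (ds : Multiset PreTree) *
            ∑ c ∈ childU cs ds,
              if (ds : Multiset PreTree) + {c} = (cs : Multiset PreTree) + {d}
              then mcoef c d else 0 := by
  have hcsC : ∀ c ∈ cs, IsCanon c := (isCanon_node_elim hs).1
  have hdsC : ∀ d ∈ ds, IsCanon d := (isCanon_node_elim ht).1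
  set U := childU cs ds with hU
  -- The per-child contribution
  set G : PreTree → ℕ := fun d =>
    if d = leaf then (if (cs : Multiset PreTree) + {leaf} = (ds : Multiset PreTree) then 1 else 0)
    else ∑ c ∈ U,
      if (ds : Multiset PreTree) + {c} = (cs : Multiset PreTree) + {d} then mcoef c d else 0
    with hG
  have step1 : mcoef (.node cs) (.node ds) = ((ds.map G).sum) := by
    rw [mcoef, ← List.countP_eq_length_filter, termPositions_eq, if_neg hne,
      countP_termPositionsList]
    rw [show (ds.map G).sum = (((ds.enumFrom 0).map Prod.snd).map G).sum by
      rw [List.enumFrom_map_snd]]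
    rw [List.map_map]
    congr 1
    refine List.map_congr_left (fun jd hjd => ?_)
    obtain ⟨j, hj, rfl⟩ := mem_enumFrom' hjd
    simp only [Nat.zero_add]
    show (termPositions (ds[j]'hj)).countP
        (fun q => decide (canon (removeAt (.node ds) (j :: q)) = .node cs)) = G (ds[j]'hj)
    by_cases hleaf : (ds[j]'hj) = leaf
    · have hiff : canon (.node (ds.eraseIdx j)) = .node cs ↔
          (cs : Multiset PreTree) + {leaf} = (ds : Multiset PreTree) := by
        rw [canon_node_eq_iff hs]
        rw [map_canon_of_isCanon (fun x hx => hdsC x (List.mem_of_mem_eraseIdx hx))]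
        have key := coe_eraseIdx_add ds j hj
        rw [hleaf] at key
        constructor
        · intro h; rw [← key, h, add_comm]
        · intro h
          have h2 : ((ds.eraseIdx j : List PreTree) : Multiset PreTree) + {leaf}
              = (cs : Multiset PreTree) + {leaf} := by rw [key, ← h, add_comm]
          exact add_right_cancel h2
      rw [hG]
      simp only [hleaf]
      rw [show termPositions leaf = [[]] from rfl, List.countP_cons, List.countP_nil]
      rw [show (j : ℕ) :: ([] : List ℕ) = [j] from rfl, removeAt_single]
      simp [hiff]
    · rw [hG]
      simp only [if_neg hleaf]
      have hcongr : (termPositions (ds[j]'hj)).countP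
          (fun q => decide (canon (removeAt (.node ds) (j :: q)) = .node cs))
          = (termPositions (ds[j]'hj)).countP
            (fun q => decide ((ds : Multiset PreTree) + {canon (removeAt (ds[j]'hj) q)}
              = (cs : Multiset PreTree) + {ds[j]'hj})) := by
        refine List.countP_congr (fun q hq => ?_)
        simp only [decide_eq_true_eq]
        cases q with
        | nil => exact absurd (nil_mem_termPositions_iff.mp hq) hleaf
        | cons a p =>
          rw [removeAt_cons_cons, removeAtList_eq ds j _ hj]
          exact cond_set_iff hdsC hs hj _
      rw [hcongr]
      have := countP_partition (fun q => canon (removeAt (ds[j]'hj) q))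
        (fun x => (ds : Multiset PreTree) + {x} = (cs : Multiset PreTree) + {ds[j]'hj})
        (termPositions (ds[j]'hj)) U ?memU
      · rw [this]
        refine Finset.sum_congr rfl (fun c _ => ?_)
        rw [mcoef, ← List.countP_eq_length_filter]
      · intro q hq hQ
        have hmem : canon (removeAt (ds[j]'hj) q) ∈ (cs : Multiset PreTree) + {ds[j]'hj} := by
          rw [← hQ]
          exact Multiset.mem_add.mpr (Or.inr (Multiset.mem_singleton_self _))
        show canon (removeAt (ds[j]'hj) q) ∈ U
        rcases Multiset.mem_add.mp hmem with h | h
        · exact Finset.mem_union_left _ (Multiset.mem_toFinset.mpr h)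
        · rw [Multiset.mem_singleton.mp h]
          exact Finset.mem_union_right _ (Multiset.mem_toFinset.mpr
            (by exact_mod_cast List.getElem_mem hj))
  rw [step1]
  have step2 : (ds.map G).sum = ∑ d ∈ U, Multiset.count d (ds : Multiset PreTree) • G d := by
    have h1 : (ds.map G).sum = (Multiset.map G (ds : Multiset PreTree)).sum := by
      rw [Multiset.map_coe, Multiset.sum_coe]
    rw [h1, Finset.sum_multiset_map_count]
    refine Finset.sum_subset Finset.subset_union_right (fun x _ hx => ?_)
    rw [Multiset.count_eq_zero_of_notMem (fun hmem => hx (Multiset.mem_toFinset.mpr hmem))]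
    simp
  rw [step2]
  by_cases hleafU : leaf ∈ U
  · rw [← Finset.sum_erase_add U (fun d => Multiset.count d (ds : Multiset PreTree) • G d)
      hleafU, add_comm]
    have hGleaf : Multiset.count leaf (ds : Multiset PreTree) • G leaf
        = Multiset.count leaf (ds : Multiset PreTree) *
          (if (cs : Multiset PreTree) + {leaf} = (ds : Multiset PreTree) then 1 else 0) := by
      simp [hG]
    rw [hGleaf]
    congr 1
    refine Finset.sum_congr rfl (fun d hd => ?_)
    have hd' : d ≠ leaf := Finset.ne_of_mem_erase hd
    simp [hG, hd']
  · have hleafds : leaf ∉ (ds : Multiset PreTree) := by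
      intro h
      exact hleafU (Finset.mem_union_right _ (Multiset.mem_toFinset.mpr h))
    rw [Multiset.count_eq_zero_of_notMem hleafds, Nat.zero_mul, Nat.zero_add]
    rw [Finset.erase_eq_of_notMem hleafU]
    refine Finset.sum_congr rfl (fun d hd => ?_)
    have hd' : d ≠ leaf := fun h => hleafU (h ▸ hd)
    simp [hG, hd']

end PreTree
namespace PreTree

theorem ncoef_node_eq {cs ds : List PreTree} (hs : IsCanon (.node cs))
    (ht : IsCanon (.node ds)) :
    ncoef (.node cs) (.node ds)
      = (if (cs : Multiset PreTree) + {leaf} = (ds : Multiset PreTree) then 1 else 0)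
        + ∑ c ∈ childU cs ds, Multiset.count c (cs : Multiset PreTree) *
            ∑ d ∈ childU cs ds,
              if (cs : Multiset PreTree) + {d} = (ds : Multiset PreTree) + {c}
              then ncoef c d else 0 := by
  have hcsC : ∀ c ∈ cs, IsCanon c := (isCanon_node_elim hs).1
  set U := childU cs ds with hU
  set G : PreTree → ℕ := fun c =>
    ∑ d ∈ U, if (cs : Multiset PreTree) + {d} = (ds : Multiset PreTree) + {c}
      then ncoef c d else 0 with hG
  have root : (decide (canon (addLeafAt (.node cs) []) = .node ds) = true) ↔
      ((cs : Multiset PreTree) + {leaf} = (ds : Multiset PreTree)) := by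
    rw [decide_eq_true_eq, addLeafAt_nil, canon_node_eq_iff ht]
    rw [map_canon_of_isCanon (fun x hx => by
      rcases List.mem_append.mp hx with h | h
      · exact hcsC x h
      · rw [List.mem_singleton.mp h]; exact isCanon_leaf)]
    rw [← Multiset.coe_add]
    simp
  have step1 : ncoef (.node cs) (.node ds)
      = (positionsList 0 cs).countP
          (fun p => decide (canon (addLeafAt (.node cs) p) = .node ds))
        + (if (cs : Multiset PreTree) + {leaf} = (ds : Multiset PreTree) then 1 else 0) := by
    rw [ncoef, ← List.countP_eq_length_filter, positions_node, List.countP_cons]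
    congr 1
    by_cases hc : (cs : Multiset PreTree) + {leaf} = (ds : Multiset PreTree)
    · rw [if_pos hc, if_pos (root.mpr hc)]
    · rw [if_neg hc, if_neg (fun h => hc (root.mp h))]
  rw [step1, countP_positionsList]
  have step2 : ((cs.enumFrom 0).map (fun jd => (positions jd.2).countP
      (fun p => decide (canon (addLeafAt (.node cs) (jd.1 :: p)) = .node ds)))).sum
      = (cs.map G).sum := by
    rw [show (cs.map G).sum = (((cs.enumFrom 0).map Prod.snd).map G).sum by
      rw [List.enumFrom_map_snd]]
    rw [List.map_map]
    congr 1
    refine List.map_congr_left (fun jd hjd => ?_)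
    obtain ⟨j, hj, rfl⟩ := mem_enumFrom' hjd
    simp only [Nat.zero_add]
    show (positions (cs[j]'hj)).countP
        (fun p => decide (canon (addLeafAt (.node cs) (j :: p)) = .node ds)) = G (cs[j]'hj)
    have hcongr : (positions (cs[j]'hj)).countP
        (fun p => decide (canon (addLeafAt (.node cs) (j :: p)) = .node ds))
        = (positions (cs[j]'hj)).countP
          (fun p => decide ((cs : Multiset PreTree) + {canon (addLeafAt (cs[j]'hj) p)}
            = (ds : Multiset PreTree) + {cs[j]'hj})) := by
      refine List.countP_congr (fun p _ => ?_)
      simp only [decide_eq_true_eq]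
      rw [addLeafAt_cons, addLeafAtList_eq cs j p hj]
      exact cond_set_iff hcsC ht hj _
    rw [hcongr]
    have := countP_partition (fun p => canon (addLeafAt (cs[j]'hj) p))
      (fun x => (cs : Multiset PreTree) + {x} = (ds : Multiset PreTree) + {cs[j]'hj})
      (positions (cs[j]'hj)) U ?memU
    · rw [this, hG]
      refine Finset.sum_congr rfl (fun d _ => ?_)
      rw [ncoef, ← List.countP_eq_length_filter]
    · intro p hp hQ
      have hmem : canon (addLeafAt (cs[j]'hj) p) ∈ (ds : Multiset PreTree) + {cs[j]'hj} := by
        rw [← hQ]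
        exact Multiset.mem_add.mpr (Or.inr (Multiset.mem_singleton_self _))
      show canon (addLeafAt (cs[j]'hj) p) ∈ U
      rcases Multiset.mem_add.mp hmem with h | h
      · exact Finset.mem_union_right _ (Multiset.mem_toFinset.mpr h)
      · rw [Multiset.mem_singleton.mp h]
        exact Finset.mem_union_left _ (Multiset.mem_toFinset.mpr
          (by exact_mod_cast List.getElem_mem hj))
  rw [step2]
  have step3 : (cs.map G).sum = ∑ c ∈ U, Multiset.count c (cs : Multiset PreTree) • G c := by
    have h1 : (cs.map G).sum = (Multiset.map G (cs : Multiset PreTree)).sum := by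
      rw [Multiset.map_coe, Multiset.sum_coe]
    rw [h1, Finset.sum_multiset_map_count]
    refine Finset.sum_subset Finset.subset_union_left (fun x _ hx => ?_)
    rw [Multiset.count_eq_zero_of_notMem (fun hmem => hx (Multiset.mem_toFinset.mpr hmem))]
    simp
  rw [step3, add_comm]
  simp [hG, smul_eq_mul]

end PreTree
namespace PreTree

/-! ### symmetry group orders via multisets -/

/-- Order of the symmetry group as a function of the multiset of children. -/
def SGm (M : Multiset PreTree) : ℕ :=
  (M.map sgOrder).prod * ∏ c ∈ M.toFinset, (M.count c).factorial

theorem sgOrderList_eq (l : List PreTree) : sgOrderList l = (l.map sgOrder).prod := by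
  induction l with
  | nil => rfl
  | cons t ts ih => rw [sgOrderList, ih, List.map_cons, List.prod_cons]

theorem sgOrder_leaf : sgOrder leaf = 1 := by
  rw [leaf, sgOrder]
  rfl

theorem sgOrder_node_eq {cs : List PreTree} (h : ∀ c ∈ cs, IsCanon c) :
    sgOrder (.node cs) = SGm (cs : Multiset PreTree) := by
  rw [sgOrder, SGm, sgOrderList_eq, canonList_eq, map_canon_of_isCanon h]
  have e1 : (Multiset.map sgOrder (cs : Multiset PreTree)).prod = (cs.map sgOrder).prod := by
    rw [Multiset.map_coe, Multiset.prod_coe]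
  have e2 : ∏ c ∈ (cs : Multiset PreTree).toFinset, (Multiset.count c (cs : Multiset PreTree)).factorial
      = (cs.dedup.map (fun c => (cs.count c).factorial)).prod := by
    have h0 : ∏ c ∈ (cs : Multiset PreTree).toFinset, (Multiset.count c (cs : Multiset PreTree)).factorial
        = ∏ c ∈ cs.toFinset, (cs.count c).factorial := by
      refine Finset.prod_congr rfl (fun c _ => ?_)
      rw [Multiset.coe_count]
    have h1 : cs.toFinset = cs.dedup.toFinset := Finset.ext (fun x => by simp)
    rw [h0, h1, List.prod_toFinset _ (List.nodup_dedup cs)]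
  rw [e1, e2]

theorem sgOrder_pos : ∀ t : PreTree, 0 < sgOrder t := by
  refine ptInd (fun cs IH => ?_)
  rw [sgOrder]
  apply Nat.mul_pos
  · rw [sgOrderList_eq]
    apply List.prod_pos
    intro x hx
    obtain ⟨c, hc, rfl⟩ := List.mem_map.mp hx
    exact IH c hc
  · apply List.prod_pos
    intro x hx
    obtain ⟨c, hc, rfl⟩ := List.mem_map.mp hx
    exact Nat.factorial_pos _

theorem fact_prod_add (M : Multiset PreTree) (d : PreTree) :
    ∏ c ∈ (M + {d}).toFinset, ((M + {d}).count c).factorial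
      = (∏ c ∈ M.toFinset, (M.count c).factorial) * (M.count d + 1) := by
  have hM' : M + {d} = d ::ₘ M := by
    rw [add_comm, Multiset.singleton_add]
  rw [hM', Multiset.toFinset_cons]
  by_cases hd : d ∈ M.toFinset
  · rw [Finset.insert_eq_self.mpr hd]
    rw [← Finset.mul_prod_erase _ _ hd, ← Finset.mul_prod_erase _ (fun c => (M.count c).factorial) hd]
    have hc1 : ((d ::ₘ M).count d).factorial = (M.count d + 1).factorial := by
      rw [Multiset.count_cons_self]
    have hc2 : ∀ x ∈ M.toFinset.erase d, ((d ::ₘ M).count x).factorial = (M.count x).factorial := by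
      intro x hx
      rw [Multiset.count_cons_of_ne (Finset.ne_of_mem_erase hx)]
    rw [hc1, Finset.prod_congr rfl hc2, Nat.factorial_succ]
    ring
  · rw [Finset.prod_insert hd]
    have hc0 : M.count d = 0 := by
      rw [Multiset.count_eq_zero]
      exact fun hmem => hd (Multiset.mem_toFinset.mpr hmem)
    have hc1 : (d ::ₘ M).count d = 1 := by rw [Multiset.count_cons_self, hc0]
    have hc2 : ∀ x ∈ M.toFinset, ((d ::ₘ M).count x).factorial = (M.count x).factorial := by
      intro x hx
      have : x ≠ d := fun h => hd (h ▸ hx)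
      rw [Multiset.count_cons_of_ne this]
    rw [hc1, Finset.prod_congr rfl hc2, hc0]
    simp [Nat.factorial_one]

theorem SGm_add (M : Multiset PreTree) (d : PreTree) :
    SGm (M + {d}) = SGm M * sgOrder d * (M.count d + 1) := by
  rw [SGm, SGm, fact_prod_add, Multiset.map_add, Multiset.prod_add]
  rw [Multiset.map_singleton, Multiset.prod_singleton]
  ring

theorem SGm_exchange {M M' : Multiset PreTree} {c d : PreTree} (hc : c ∈ M) (_hne : c ≠ d)
    (h : M + {d} = M' + {c}) :
    SGm M' * sgOrder c * M.count c = SGm M * sgOrder d * M'.count d := by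
  set N := M.erase c with hN
  have hM : M = N + {c} := by
    rw [hN, add_comm, Multiset.singleton_add, Multiset.cons_erase hc]
  have hM' : M' = N + {d} := by
    have h2 : (N + {d}) + {c} = M' + {c} := by
      rw [add_right_comm, ← hM, h]
    exact (add_right_cancel h2).symm
  have hcc : M.count c = N.count c + 1 := by
    rw [hM, Multiset.count_add, Multiset.count_singleton, if_pos rfl]
  have hcd : M'.count d = N.count d + 1 := by
    rw [hM', Multiset.count_add, Multiset.count_singleton, if_pos rfl]
  rw [hcc, hcd, hM, hM', SGm_add, SGm_add]
  ring

end PreTree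
namespace PreTree

/-- **Key local identity**: `m(s,t)·|SG(s)| = n(s,t)·|SG(t)|`. -/
theorem keyIdentity : ∀ t s : PreTree, IsCanon s → IsCanon t → 2 ≤ size t →
    mcoef s t * sgOrder s = ncoef s t * sgOrder t := by
  refine ptInd (fun ds IH => ?_)
  intro s hs ht hsize
  cases s with
  | node cs =>
    have hne : ds ≠ [] := by
      intro h
      rw [h] at hsize
      have : size (PreTree.node []) = 1 := rfl
      omega
    have hcsC : ∀ c ∈ cs, IsCanon c := (isCanon_node_elim hs).1
    have hdsC : ∀ d ∈ ds, IsCanon d := (isCanon_node_elim ht).1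
    rw [mcoef_node_eq hs ht hne, ncoef_node_eq hs ht,
      sgOrder_node_eq hcsC, sgOrder_node_eq hdsC]
    rw [add_mul, add_mul]
    congr 1
    · -- root terms
      by_cases hc : (cs : Multiset PreTree) + {leaf} = (ds : Multiset PreTree)
      · rw [if_pos hc]
        have hcount : Multiset.count leaf (ds : Multiset PreTree)
            = Multiset.count leaf (cs : Multiset PreTree) + 1 := by
          rw [← hc, Multiset.count_add, Multiset.count_singleton, if_pos rfl]
        have hSG : SGm (ds : Multiset PreTree)
            = SGm (cs : Multiset PreTree) * (Multiset.count leaf (cs : Multiset PreTree) + 1) := by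
          rw [← hc, SGm_add, sgOrder_leaf, Nat.mul_one]
        rw [hcount, hSG]
        ring
      · rw [if_neg hc]
        ring
    · -- child terms
      have hinner : ∀ c ∈ childU cs ds,
          (∑ d ∈ childU cs ds,
            if (cs : Multiset PreTree) + {d} = (ds : Multiset PreTree) + {c}
            then ncoef c d else 0)
          = ∑ d ∈ (childU cs ds).erase leaf,
            if (cs : Multiset PreTree) + {d} = (ds : Multiset PreTree) + {c}
            then ncoef c d else 0 := by
        intro c _
        refine (Finset.sum_subset (Finset.erase_subset _ _) (fun x _ hx => ?_)).symm
        have hxleaf : x = leaf := by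
          by_contra hxl
          exact hx (Finset.mem_erase.mpr ⟨hxl, by assumption⟩)
        rw [hxleaf, ncoef_to_leaf]
        simp
      have lhs_eq : (∑ d ∈ (childU cs ds).erase leaf,
            Multiset.count d (ds : Multiset PreTree) *
            ∑ c ∈ childU cs ds,
              if (ds : Multiset PreTree) + {c} = (cs : Multiset PreTree) + {d}
              then mcoef c d else 0) * SGm (cs : Multiset PreTree)
          = ∑ d ∈ (childU cs ds).erase leaf, ∑ c ∈ childU cs ds,
              Multiset.count d (ds : Multiset PreTree) *
              (if (ds : Multiset PreTree) + {c} = (cs : Multiset PreTree) + {d}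
               then mcoef c d else 0) * SGm (cs : Multiset PreTree) := by
        rw [Finset.sum_mul]
        refine Finset.sum_congr rfl (fun d _ => ?_)
        rw [Finset.mul_sum, Finset.sum_mul]
      have rhs_eq : (∑ c ∈ childU cs ds,
            Multiset.count c (cs : Multiset PreTree) *
            ∑ d ∈ childU cs ds,
              if (cs : Multiset PreTree) + {d} = (ds : Multiset PreTree) + {c}
              then ncoef c d else 0) * SGm (ds : Multiset PreTree)
          = ∑ d ∈ (childU cs ds).erase leaf, ∑ c ∈ childU cs ds,
              Multiset.count c (cs : Multiset PreTree) *
              (if (cs : Multiset PreTree) + {d} = (ds : Multiset PreTree) + {c}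
               then ncoef c d else 0) * SGm (ds : Multiset PreTree) := by
        rw [Finset.sum_mul]
        rw [show (∑ c ∈ childU cs ds, (Multiset.count c (cs : Multiset PreTree) *
            ∑ d ∈ childU cs ds,
              if (cs : Multiset PreTree) + {d} = (ds : Multiset PreTree) + {c}
              then ncoef c d else 0) * SGm (ds : Multiset PreTree))
          = ∑ c ∈ childU cs ds, ∑ d ∈ (childU cs ds).erase leaf,
              Multiset.count c (cs : Multiset PreTree) *
              (if (cs : Multiset PreTree) + {d} = (ds : Multiset PreTree) + {c}
               then ncoef c d else 0) * SGm (ds : Multiset PreTree) from ?_]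
        · exact Finset.sum_comm
        · refine Finset.sum_congr rfl (fun c hc => ?_)
          rw [hinner c hc, Finset.mul_sum, Finset.sum_mul]
      rw [lhs_eq, rhs_eq]
      refine Finset.sum_congr rfl (fun d hd => ?_)
      refine Finset.sum_congr rfl (fun c hc => ?_)
      have hdleaf : d ≠ leaf := (Finset.mem_erase.mp hd).1
      by_cases hcond : (cs : Multiset PreTree) + {d} = (ds : Multiset PreTree) + {c}
      · rw [if_pos hcond.symm, if_pos hcond]
        by_cases hsz : size d = size c + 1
        · have hcd : c ≠ d := fun h => by rw [h] at hsz; omega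
          have hcmem : c ∈ (cs : Multiset PreTree) := by
            have : c ∈ (cs : Multiset PreTree) + {d} := by
              rw [hcond]
              exact Multiset.mem_add.mpr (Or.inr (Multiset.mem_singleton_self _))
            rcases Multiset.mem_add.mp this with h | h
            · exact h
            · exact absurd (Multiset.mem_singleton.mp h) hcd
          have hdmem : d ∈ (ds : Multiset PreTree) := by
            have : d ∈ (ds : Multiset PreTree) + {c} := by
              rw [← hcond]
              exact Multiset.mem_add.mpr (Or.inr (Multiset.mem_singleton_self _))
            rcases Multiset.mem_add.mp this with h | h
            · exact h
            · exact absurd (Multiset.mem_singleton.mp h) (Ne.symm hcd)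
          have hdsize : 2 ≤ size d := by
            have h1 := one_le_size d
            rcases Nat.lt_or_ge (size d) 2 with h | h
            · exfalso
              exact hdleaf (size_eq_one_iff.mp (by omega))
            · exact h
          have e1 : mcoef c d * sgOrder c = ncoef c d * sgOrder d :=
            IH d (by exact_mod_cast hdmem) c (hcsC c (by exact_mod_cast hcmem))
              (hdsC d (by exact_mod_cast hdmem)) hdsize
          have e2 : SGm (ds : Multiset PreTree) * sgOrder c * Multiset.count c (cs : Multiset PreTree)
              = SGm (cs : Multiset PreTree) * sgOrder d * Multiset.count d (ds : Multiset PreTree) :=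
            SGm_exchange hcmem hcd hcond
          refine Nat.eq_of_mul_eq_mul_right (sgOrder_pos c) ?_
          calc Multiset.count d (ds : Multiset PreTree) * mcoef c d * SGm (cs : Multiset PreTree)
                * sgOrder c
              = (mcoef c d * sgOrder c) *
                  (Multiset.count d (ds : Multiset PreTree) * SGm (cs : Multiset PreTree)) := by ring
            _ = (ncoef c d * sgOrder d) *
                  (Multiset.count d (ds : Multiset PreTree) * SGm (cs : Multiset PreTree)) := by
                rw [e1]
            _ = ncoef c d * (SGm (cs : Multiset PreTree) * sgOrder d *
                  Multiset.count d (ds : Multiset PreTree)) := by ring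
            _ = ncoef c d * (SGm (ds : Multiset PreTree) * sgOrder c *
                  Multiset.count c (cs : Multiset PreTree)) := by rw [← e2]
            _ = Multiset.count c (cs : Multiset PreTree) * ncoef c d *
                  SGm (ds : Multiset PreTree) * sgOrder c := by ring
        · rw [mcoef_eq_zero_of_size hdleaf hsz, ncoef_eq_zero_of_size hsz]
          ring
      · rw [if_neg (fun h => hcond h.symm), if_neg hcond]
        ring

end PreTree
namespace PreTree

/-! ### treeList -/

theorem treeList_spec : ∀ n : ℕ, ∀ t ∈ treeList n, IsCanon t ∧ size t = n := by
  intro n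
  induction n using Nat.strong_induction_on with
  | _ n IH =>
    match n with
    | 0 => intro t ht; exact absurd ht List.not_mem_nil
    | 1 =>
      intro t ht
      rw [treeList] at ht
      rw [List.mem_singleton.mp ht]
      exact ⟨isCanon_leaf, rfl⟩
    | (n + 2) =>
      intro t ht
      rw [treeList, List.mem_dedup, List.mem_flatMap] at ht
      obtain ⟨s, hs, hmem⟩ := ht
      obtain ⟨p, hp, rfl⟩ := List.mem_map.mp hmem
      obtain ⟨hsC, hssize⟩ := IH (n + 1) (by omega) s hs
      refine ⟨isCanon_canon _, ?_⟩
      rw [size_canon, size_addLeafAt s p hp, hssize]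

theorem treeList_nodup (n : ℕ) : (treeList n).Nodup := by
  match n with
  | 0 => exact List.nodup_nil
  | 1 => simp [treeList]
  | (n + 2) => rw [treeList]; exact List.nodup_dedup _

theorem mcoef_pos {s t : PreTree} {q : List ℕ} (hq : q ∈ termPositions t)
    (heq : canon (removeAt t q) = s) : 0 < mcoef s t := by
  rw [mcoef, ← List.countP_eq_length_filter, List.countP_pos_iff]
  exact ⟨q, hq, by simpa using heq⟩

theorem ncoef_pos_of_exists {s t : PreTree} {p : List ℕ} (hp : p ∈ positions s)
    (heq : canon (addLeafAt s p) = t) : 0 < ncoef s t := by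
  rw [ncoef, ← List.countP_eq_length_filter, List.countP_pos_iff]
  exact ⟨p, hp, by simpa using heq⟩

theorem exists_of_ncoef_pos {s t : PreTree} (h : 0 < ncoef s t) :
    ∃ p ∈ positions s, canon (addLeafAt s p) = t := by
  rw [ncoef, ← List.countP_eq_length_filter, List.countP_pos_iff] at h
  obtain ⟨p, hp, hpp⟩ := h
  exact ⟨p, hp, by simpa using hpp⟩

theorem treeList_complete : ∀ n : ℕ, 1 ≤ n → ∀ t : PreTree, IsCanon t → size t = n →
    t ∈ treeList n := by
  intro n
  induction n using Nat.strong_induction_on with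
  | _ n IH =>
    match n with
    | 0 => omega
    | 1 =>
      intro _ t htC htsize
      rw [treeList, List.mem_singleton]
      exact size_eq_one_iff.mp htsize
    | (n + 2) =>
      intro _ t htC htsize
      have htleaf : t ≠ leaf := by
        intro h
        rw [h] at htsize
        have : size leaf = 1 := rfl
        omega
      obtain ⟨q, hq⟩ : ∃ q, q ∈ termPositions t := by
        cases hterm : termPositions t with
        | nil => exact absurd hterm (termPositions_ne_nil t)
        | cons a l => exact ⟨a, hterm ▸ (List.mem_cons_self (a := a) (l := l))⟩
      have hqne : q ≠ [] := by
        intro h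
        exact htleaf (nil_mem_termPositions_iff.mp (h ▸ hq))
      have hssize : size (canon (removeAt t q)) = n + 1 := by
        rw [size_canon]
        have := size_removeAt t q hq hqne
        omega
      have hsmem : canon (removeAt t q) ∈ treeList (n + 1) :=
        IH (n + 1) (by omega) (by omega) _ (isCanon_canon _) hssize
      have hm : 0 < mcoef (canon (removeAt t q)) t := mcoef_pos hq rfl
      have hkey := keyIdentity t (canon (removeAt t q)) (isCanon_canon _) htC (by omega)
      have hn : 0 < ncoef (canon (removeAt t q)) t := by
        by_contra h0
        have : ncoef (canon (removeAt t q)) t = 0 := by omega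
        rw [this, Nat.zero_mul] at hkey
        have := sgOrder_pos (canon (removeAt t q))
        have := Nat.mul_pos hm this
        omega
      obtain ⟨p, hp, heq⟩ := exists_of_ncoef_pos hn
      rw [treeList, List.mem_dedup, List.mem_flatMap]
      exact ⟨canon (removeAt t q), hsmem, List.mem_map.mpr ⟨p, hp, heq⟩⟩

/-! ### recursions for mWt / nWt -/

theorem mWt_leaf : mWt leaf = 1 := by
  rw [mWt]
  show mGen 0 leaf leaf = 1
  simp [mGen]

theorem nWt_leaf : nWt leaf = 1 := by
  rw [nWt]
  show nGen 0 leaf leaf = 1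
  simp [nGen]

theorem mWt_unfold {t : PreTree} {n : ℕ} (h : size t = n + 2) :
    mWt t = ((treeList (n + 1)).map (fun s => mcoef s t * mWt s)).sum := by
  rw [mWt, h]
  show mGen (n + 1) leaf t = _
  rw [mGen, h]
  refine congrArg List.sum (List.map_congr_left (fun s hs => ?_))
  obtain ⟨_, hssize⟩ := treeList_spec _ s hs
  congr 1
  rw [mWt, hssize, show n + 2 - 1 - 1 = n by omega]

theorem nWt_unfold {t : PreTree} {n : ℕ} (h : size t = n + 2) :
    nWt t = ((treeList (n + 1)).map (fun s => nWt s * ncoef s t)).sum := by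
  rw [nWt, h]
  show nGen (n + 1) leaf t = _
  rw [nGen]
  rw [show leaf.size + n = n + 1 by rw [Nat.add_comm]; rfl]
  refine congrArg List.sum (List.map_congr_left (fun s hs => ?_))
  obtain ⟨_, hssize⟩ := treeList_spec _ s hs
  congr 1
  rw [nWt, hssize, show n + 1 - 1 = n by omega]

/-! ### the global identity m = n · SG -/

theorem mWt_eq_nWt_mul_sg : ∀ n : ℕ, ∀ t ∈ treeList n, mWt t = nWt t * sgOrder t := by
  intro n
  induction n using Nat.strong_induction_on with
  | _ n IH =>
    match n with
    | 0 => intro t ht; exact absurd ht List.not_mem_nil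
    | 1 =>
      intro t ht
      rw [treeList, List.mem_singleton] at ht
      rw [ht, mWt_leaf, nWt_leaf, sgOrder_leaf]
    | (n + 2) =>
      intro t ht
      obtain ⟨htC, htsize⟩ := treeList_spec _ t ht
      rw [mWt_unfold htsize, nWt_unfold htsize]
      rw [← List.sum_map_mul_right]
      refine congrArg List.sum (List.map_congr_left (fun s hs => ?_))
      obtain ⟨hsC, hssize⟩ := treeList_spec _ s hs
      rw [IH (n + 1) (by omega) s hs]
      have hkey := keyIdentity t s hsC htC (by omega)
      calc mcoef s t * (nWt s * sgOrder s)
          = (mcoef s t * sgOrder s) * nWt s := by ring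
        _ = (ncoef s t * sgOrder t) * nWt s := by rw [hkey]
        _ = nWt s * ncoef s t * sgOrder t := by ring

theorem nWt_pos : ∀ n : ℕ, ∀ t ∈ treeList n, 0 < nWt t := by
  intro n
  induction n using Nat.strong_induction_on with
  | _ n IH =>
    match n with
    | 0 => intro t ht; exact absurd ht List.not_mem_nil
    | 1 =>
      intro t ht
      rw [treeList, List.mem_singleton] at ht
      rw [ht, nWt_leaf]
      omega
    | (n + 2) =>
      intro t ht
      obtain ⟨htC, htsize⟩ := treeList_spec _ t ht
      have hmem := ht
      rw [treeList, List.mem_dedup, List.mem_flatMap] at hmem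
      obtain ⟨s, hs, hmem2⟩ := hmem
      obtain ⟨p, hp, heq⟩ := List.mem_map.mp hmem2
      have hspos : 0 < nWt s := IH (n + 1) (by omega) s hs
      have hncoef : 0 < ncoef s t := ncoef_pos_of_exists hp heq
      rw [nWt_unfold htsize]
      have hle : nWt s * ncoef s t ≤ ((treeList (n + 1)).map (fun u => nWt u * ncoef u t)).sum :=
        List.single_le_sum (fun x _ => Nat.zero_le x) _
          (List.mem_map_of_mem hs)
      have : 0 < nWt s * ncoef s t := Nat.mul_pos hspos hncoef
      omega

theorem mWt_pos {n : ℕ} {t : PreTree} (ht : t ∈ treeList n) : 0 < mWt t := by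
  rw [mWt_eq_nWt_mul_sg n t ht]
  exact Nat.mul_pos (nWt_pos n t ht) (sgOrder_pos t)

end PreTree

open PreTree in
/-- `K_n = (1/C(n,2)) · A G P A⁻¹` where `A` is the diagonal
operator `t ↦ m(t)·t`; entrywise, for all `t, t' ∈ 𝒯_n`,
`K(t,t') = (m(t')/(C(n,2) m(t))) · Σ_{s : s ↗ t, s ↗ t'} m(s,t) n(s,t')`. -/
theorem K_eq_AGPAinv (n : ℕ) (hn : 2 ≤ n) (t t' : PreTree)
    (ht : t ∈ trees n) (ht' : t' ∈ trees n) :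
    K n t t' = (mWt t' : ℚ) / ((Nat.choose n 2 : ℚ) * (mWt t : ℚ))
      * ∑ s ∈ trees (n - 1), ((mcoef s t * ncoef s t' : ℕ) : ℚ) := by
  have htL : t ∈ treeList n := List.mem_toFinset.mp ht
  have ht'L : t' ∈ treeList n := List.mem_toFinset.mp ht'
  obtain ⟨htC, htsize⟩ := treeList_spec _ t htL
  obtain ⟨ht'C, ht'size⟩ := treeList_spec _ t' ht'L
  rw [K, Finset.mul_sum]
  refine Finset.sum_congr rfl (fun s hsF => ?_)
  have hsL : s ∈ treeList (n - 1) := List.mem_toFinset.mp hsF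
  obtain ⟨hsC, hssize⟩ := treeList_spec _ s hsL
  have hnspos : 0 < nWt s := nWt_pos _ s hsL
  have hmtpos : 0 < mWt t := mWt_pos htL
  have hCpos : 0 < Nat.choose n 2 := Nat.choose_pos hn
  have hms : mWt s = nWt s * sgOrder s := mWt_eq_nWt_mul_sg _ s hsL
  have hmt' : mWt t' = nWt t' * sgOrder t' := mWt_eq_nWt_mul_sg _ t' ht'L
  have hkey := keyIdentity t' s hsC ht'C (by omega)
  have hNat : mcoef s t' * nWt t' * mWt s = ncoef s t' * mWt t' * nWt s := by
    rw [hms, hmt']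
    calc mcoef s t' * nWt t' * (nWt s * sgOrder s)
        = (mcoef s t' * sgOrder s) * (nWt t' * nWt s) := by ring
      _ = (ncoef s t' * sgOrder t') * (nWt t' * nWt s) := by rw [hkey]
      _ = ncoef s t' * (nWt t' * sgOrder t') * nWt s := by ring
  have hQ : (mcoef s t' : ℚ) * (nWt t' : ℚ) * (mWt s : ℚ)
      = (ncoef s t' : ℚ) * (mWt t' : ℚ) * (nWt s : ℚ) := by exact_mod_cast hNat
  have h1 : (mWt t : ℚ) ≠ 0 := Nat.cast_ne_zero.mpr (by omega)
  have h2 : (nWt s : ℚ) ≠ 0 := Nat.cast_ne_zero.mpr (by omega)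
  have h3 : (Nat.choose n 2 : ℚ) ≠ 0 := Nat.cast_ne_zero.mpr (by omega)
  rw [Pd, Pu]
  push_cast
  field_simp
  linear_combination (mcoef s t : ℚ) * hQ

end RootedTreeChain
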